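/- Let [n] be the disjoint union of sets X_1, ..., X_r, and let P = {(A_i, B_i) : i in [m]} be a skew Bollobás system of subsets of [n] with |A_i ∩ X_k| = a_k and |B_i ∩ X_k| = b_k for all i ∈ [m] and k ∈ [r]. Then m ≤ ∏_{k=1}^r binom(a_k + b_k, a_k). -/
import Mathlib
open Finset

noncomputable def skewW {n : ℕ} (b : ℕ) (Bs : Finset (Fin n)) (d : Fin (b+1)) : ℝ :=
  (∏ v ∈ Bs, (Polynomial.X - Polynomial.C ((v : ℕ) : ℝ))).coeff d

noncomputable def skewU {n : ℕ} (a b : ℕ) (As : Finset (Fin n)) (μ : Sym (Fin (b+1)) a) : ℝ :=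
  ∑ g : {x // x ∈ As} → Fin (b+1),
    if Multiset.map g Finset.univ.val = (μ : Multiset (Fin (b+1))) then
      ∏ u : {x // x ∈ As}, (((u : Fin n) : ℕ) : ℝ) ^ ((g u : ℕ)) else 0

noncomputable def skewV {n : ℕ} {a b : ℕ} (Bs : Finset (Fin n)) (μ : Sym (Fin (b+1)) a) : ℝ :=
  ((μ : Multiset (Fin (b+1))).map (skewW b Bs)).prod

lemma skew_eval {n b : ℕ} (Bs : Finset (Fin n)) (hB : Bs.card = b) (x : ℝ) :
    ∏ v ∈ Bs, (x - ((v : ℕ) : ℝ)) = ∑ d : Fin (b+1), skewW b Bs d * x ^ (d : ℕ) := by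
  have hmon : ∀ v ∈ Bs, (Polynomial.X - Polynomial.C ((v:ℕ):ℝ)).Monic :=
    fun v _ => Polynomial.monic_X_sub_C _
  have hdeg : (∏ v ∈ Bs, (Polynomial.X - Polynomial.C ((v:ℕ):ℝ))).natDegree = b := by
    rw [Polynomial.natDegree_prod_of_monic _ _ hmon]
    rw [← hB]
    calc ∑ v ∈ Bs, (Polynomial.X - Polynomial.C ((v:ℕ):ℝ)).natDegree = ∑ _v ∈ Bs, 1 :=
          Finset.sum_congr rfl fun v _ => Polynomial.natDegree_X_sub_C _
      _ = Bs.card := by simp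
  have h1 : (∏ v ∈ Bs, (Polynomial.X - Polynomial.C ((v:ℕ):ℝ))).eval x
      = ∑ i ∈ Finset.range (b+1),
        (∏ v ∈ Bs, (Polynomial.X - Polynomial.C ((v:ℕ):ℝ))).coeff i * x ^ i := by
    have := Polynomial.eval_eq_sum_range'
      (p := ∏ v ∈ Bs, (Polynomial.X - Polynomial.C ((v:ℕ):ℝ))) (n := b+1) (by omega) x
    exact this
  have h2 : (∏ v ∈ Bs, (Polynomial.X - Polynomial.C ((v:ℕ):ℝ))).eval x
      = ∏ v ∈ Bs, (x - ((v:ℕ):ℝ)) := by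
    simp [Polynomial.eval_prod]
  rw [← h2, h1, ← Fin.sum_univ_eq_sum_range]
  rfl

lemma skew_pair {n a b : ℕ} (As Bs : Finset (Fin n)) (hA : As.card = a) (hB : Bs.card = b) :
    ∏ u ∈ As, ∏ v ∈ Bs, (((u:ℕ):ℝ) - ((v:ℕ):ℝ))
      = ∑ μ : Sym (Fin (b+1)) a, skewU a b As μ * skewV Bs μ := by
  have step1 : ∏ u ∈ As, ∏ v ∈ Bs, (((u:ℕ):ℝ) - ((v:ℕ):ℝ))
      = ∏ u : {x // x ∈ As}, ∑ d : Fin (b+1), skewW b Bs d * (((u:Fin n):ℕ):ℝ) ^ (d:ℕ) := by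
    rw [← Finset.prod_coe_sort As]
    exact Finset.prod_congr rfl fun u _ => skew_eval Bs hB _
  rw [step1, Fintype.prod_sum]
  -- now : ∑ g : {x//x∈As} → Fin (b+1), ∏ u, skewW b Bs (g u) * (u:ℝ)^(g u)
  have step2 : ∀ g : {x // x ∈ As} → Fin (b+1),
      (∏ u : {x // x ∈ As}, skewW b Bs (g u) * (((u:Fin n):ℕ):ℝ) ^ ((g u:ℕ)))
      = ((Multiset.map g Finset.univ.val).map (skewW b Bs)).prod
        * ∏ u : {x // x ∈ As}, (((u:Fin n):ℕ):ℝ) ^ ((g u:ℕ)) := by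
    intro g
    rw [Finset.prod_mul_distrib]
    congr 1
    rw [Multiset.map_map]
    rfl
  rw [Finset.sum_congr rfl fun g _ => step2 g]
  have hcard : ∀ g : {x // x ∈ As} → Fin (b+1),
      Multiset.card (Multiset.map g Finset.univ.val) = a := by
    intro g
    rw [Multiset.card_map]
    change Finset.univ.card = a
    rw [Finset.card_univ, Fintype.card_coe, hA]
  have step3 : ∀ g : {x // x ∈ As} → Fin (b+1),
      ((Multiset.map g Finset.univ.val).map (skewW b Bs)).prod
        * ∏ u : {x // x ∈ As}, (((u:Fin n):ℕ):ℝ) ^ ((g u:ℕ))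
      = ∑ μ : Sym (Fin (b+1)) a,
          (if Multiset.map g Finset.univ.val = (μ : Multiset (Fin (b+1))) then
            ((μ : Multiset (Fin (b+1))).map (skewW b Bs)).prod
              * ∏ u : {x // x ∈ As}, (((u:Fin n):ℕ):ℝ) ^ ((g u:ℕ)) else 0) := by
    intro g
    symm
    set μ₀ : Sym (Fin (b+1)) a := ⟨Multiset.map g Finset.univ.val, hcard g⟩ with hμ₀def
    have hcoe : (μ₀ : Multiset (Fin (b+1))) = Multiset.map g Finset.univ.val := rfl
    have hmem : μ₀ ∈ (Finset.univ : Finset (Sym (Fin (b+1)) a)) := Finset.mem_univ μ₀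
    refine (Finset.sum_eq_single_of_mem μ₀ hmem ?_).trans ?_
    · intro μ _ hne
      refine if_neg fun h => hne (Sym.coe_injective ?_)
      rw [hcoe, ← h]
    · rw [if_pos hcoe.symm, hcoe]
  rw [Finset.sum_congr rfl fun g _ => step3 g, Finset.sum_comm]
  refine Finset.sum_congr rfl fun μ _ => ?_
  rw [skewU, skewV, Finset.sum_mul]
  refine Finset.sum_congr rfl fun g _ => ?_
  split_ifs with h
  · ring
  · simp

theorem skew_bollobas_partition_uniform (n m r : ℕ)
    (X : Fin r → Finset (Fin n))
    (hXdisj : ∀ k l, k ≠ l → Disjoint (X k) (X l))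
    (hXcover : (Finset.univ : Finset (Fin n)) = Finset.univ.biUnion X)
    (A B : Fin m → Finset (Fin n))
    (hdisj : ∀ i, Disjoint (A i) (B i))
    (hcross : ∀ i j, i < j → (A i ∩ B j).Nonempty)
    (a b : Fin r → ℕ)
    (hA : ∀ i k, (A i ∩ X k).card = a k)
    (hB : ∀ i k, (B i ∩ X k).card = b k) :
    m ≤ ∏ k, (a k + b k).choose (a k) := by
  classical
  let U : Matrix (Fin m) (∀ k : Fin r, Sym (Fin (b k + 1)) (a k)) ℝ :=
    fun i μ => ∏ k, skewU (a k) (b k) (A i ∩ X k) (μ k)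
  let V : Matrix (∀ k : Fin r, Sym (Fin (b k + 1)) (a k)) (Fin m) ℝ :=
    fun μ j => ∏ k, skewV (B j ∩ X k) (μ k)
  have hMval : ∀ i j, (U * V) i j
      = ∏ k, ∏ u ∈ A i ∩ X k, ∏ v ∈ B j ∩ X k, (((u:ℕ):ℝ) - ((v:ℕ):ℝ)) := by
    intro i j
    rw [Matrix.mul_apply]
    have e1 : ∀ μ : ∀ k : Fin r, Sym (Fin (b k + 1)) (a k), U i μ * V μ j
        = ∏ k, (skewU (a k) (b k) (A i ∩ X k) (μ k) * skewV (B j ∩ X k) (μ k)) :=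
      fun μ => (Finset.prod_mul_distrib).symm
    rw [Finset.sum_congr rfl fun μ _ => e1 μ]
    rw [(Fintype.prod_sum (fun (k : Fin r) (ν : Sym (Fin (b k + 1)) (a k)) =>
      skewU (a k) (b k) (A i ∩ X k) ν * skewV (B j ∩ X k) ν)).symm]
    exact Finset.prod_congr rfl fun k _ => (skew_pair _ _ (hA i k) (hB j k)).symm
  have htri : ∀ i j, i < j → (U * V) i j = 0 := by
    intro i j hij
    rw [hMval]
    obtain ⟨x, hx⟩ := hcross i j hij
    rw [Finset.mem_inter] at hx
    have hxk : ∃ k, x ∈ X k := by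
      have hx2 : x ∈ Finset.univ.biUnion X := hXcover ▸ Finset.mem_univ x
      obtain ⟨k, _, hk⟩ := Finset.mem_biUnion.mp hx2
      exact ⟨k, hk⟩
    obtain ⟨k, hk⟩ := hxk
    refine Finset.prod_eq_zero (Finset.mem_univ k) ?_
    refine Finset.prod_eq_zero (Finset.mem_inter.mpr ⟨hx.1, hk⟩) ?_
    refine Finset.prod_eq_zero (Finset.mem_inter.mpr ⟨hx.2, hk⟩) ?_
    simp
  have hdiag : ∀ i, (U * V) i i ≠ 0 := by
    intro i
    rw [hMval]
    refine Finset.prod_ne_zero_iff.mpr fun k _ => ?_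
    refine Finset.prod_ne_zero_iff.mpr fun u hu => ?_
    refine Finset.prod_ne_zero_iff.mpr fun v hv => ?_
    have hu' := Finset.mem_inter.mp hu
    have hv' := Finset.mem_inter.mp hv
    have hne : u ≠ v := fun h => (Finset.disjoint_left.mp (hdisj i) hu'.1) (h ▸ hv'.1)
    have hne2 : ((u:ℕ):ℝ) ≠ ((v:ℕ):ℝ) := by
      exact_mod_cast fun h => hne (Fin.val_injective (by exact_mod_cast h))
    exact sub_ne_zero.mpr hne2
  have hdet : (U * V).det ≠ 0 := by
    rw [Matrix.det_of_lowerTriangular (U * V)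
      (fun i j h => htri i j (by simpa using h))]
    exact Finset.prod_ne_zero_iff.mpr fun i _ => hdiag i
  have hunit : IsUnit (U * V) :=
    (Matrix.isUnit_iff_isUnit_det _).mpr (isUnit_iff_ne_zero.mpr hdet)
  have h1 : (U * V).rank = m := by
    rw [Matrix.rank_of_isUnit _ hunit, Fintype.card_fin]
  have h2 : (U * V).rank ≤ Fintype.card (∀ k : Fin r, Sym (Fin (b k + 1)) (a k)) :=
    le_trans (Matrix.rank_mul_le_left U V) (Matrix.rank_le_card_width U)
  have hcard : Fintype.card (∀ k : Fin r, Sym (Fin (b k + 1)) (a k))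
      = ∏ k, (a k + b k).choose (a k) := by
    rw [Fintype.card_pi]
    refine Finset.prod_congr rfl fun k _ => ?_
    rw [Sym.card_sym_eq_choose, Fintype.card_fin]
    congr 1
    omega
  rw [← h1]
  rw [hcard] at h2
  exact h2
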